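/- arXiv:1710.10679 — 3 statements merged into one kernel-verified Lean document; each statement's English description precedes it below -/
import Mathlib

section
/- Let Y₁, Y₂, … be independent random variables where Y_n is geometric with parameter 1 - q^n (P[Y_n = k] = (1-q^n) q^{nk} for k ∈ ℕ), q ∈ (0,1). Then S_q = Σ_{n=1}^∞ n Y_n converges almost surely, and its Laplace transform satisfies E[e^{z S_q}] = Π_{n=1}^∞ (1 - q^n)/(1 - q^n e^{nz}) for all complex z with Re(z) < -log q. In particular S_q has the law of the size of a random integer partition chosen with probability proportional to q^{|λ|}. -/
open MeasureTheory ProbabilityTheory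

lemma stmt8_integral_mul {Ω : Type*} {mΩ : MeasurableSpace Ω} {μ : Measure Ω}
    [IsProbabilityMeasure μ] {X Y : Ω → ℂ} (h : IndepFun X Y μ)
    (hX : AEMeasurable X μ) (hY : AEMeasurable Y μ) :
    ∫ ω, X ω * Y ω ∂μ = (∫ ω, X ω ∂μ) * ∫ ω, Y ω ∂μ := by
  have hmap := (indepFun_iff_map_prod_eq_prod_map_map hX hY).mp h
  have hpair : AEMeasurable (fun ω => (X ω, Y ω)) μ := hX.prodMk hY
  haveI : IsProbabilityMeasure (Measure.map X μ) := Measure.isProbabilityMeasure_map hX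
  haveI : IsProbabilityMeasure (Measure.map Y μ) := Measure.isProbabilityMeasure_map hY
  have hcont : AEStronglyMeasurable (fun p : ℂ × ℂ => p.1 * p.2)
      (Measure.map (fun ω => (X ω, Y ω)) μ) :=
    (continuous_fst.mul continuous_snd).aestronglyMeasurable
  calc ∫ ω, X ω * Y ω ∂μ
      = ∫ p : ℂ × ℂ, p.1 * p.2 ∂(Measure.map (fun ω => (X ω, Y ω)) μ) :=
        (integral_map hpair hcont).symm
    _ = ∫ p : ℂ × ℂ, p.1 * p.2 ∂((Measure.map X μ).prod (Measure.map Y μ)) := by rw [hmap]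
    _ = (∫ x, x ∂(Measure.map X μ)) * ∫ y, y ∂(Measure.map Y μ) := integral_prod_mul id id
    _ = _ := by
        rw [show (∫ x : ℂ, x ∂(Measure.map X μ)) = ∫ x : ℂ, id x ∂(Measure.map X μ) from rfl,
          show (∫ y : ℂ, y ∂(Measure.map Y μ)) = ∫ y : ℂ, id y ∂(Measure.map Y μ) from rfl,
          integral_map hX aestronglyMeasurable_id, integral_map hY aestronglyMeasurable_id]
        simp [id]

lemma stmt8_single {Ω : Type*} {mΩ : MeasurableSpace Ω} {μ : Measure Ω}
    [IsProbabilityMeasure μ] {q : ℝ} (hq0 : 0 < q) (hq1 : q < 1)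
    {X : Ω → ℕ} (hX : Measurable X) {m : ℕ} (hm : m ≠ 0)
    (hlawX : ∀ k, μ {ω | X ω = k} = ENNReal.ofReal ((1 - q ^ m) * q ^ (m * k)))
    {z : ℂ} (hz : q * Real.exp z.re < 1) :
    Integrable (fun ω => Complex.exp (z * ((m : ℂ) * (X ω : ℂ)))) μ ∧
    ∫ ω, Complex.exp (z * ((m : ℂ) * (X ω : ℂ))) ∂μ
      = (1 - (q : ℂ) ^ m) / (1 - (q : ℂ) ^ m * Complex.exp ((m : ℂ) * z)) := by
  set t := z.re with htdef
  have hqe0 : 0 ≤ q * Real.exp t := by positivity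
  have hqm1 : q ^ m < 1 := pow_lt_one₀ hq0.le hq1 hm
  have hqm0 : 0 < q ^ m := pow_pos hq0 m
  -- the push-forward measure
  set ν := Measure.map X μ with hν
  have hνk : ∀ k, ν {k} = ENNReal.ofReal ((1 - q ^ m) * q ^ (m * k)) := by
    intro k
    rw [hν, Measure.map_apply hX (measurableSet_singleton k)]
    exact hlawX k
  set g : ℕ → ℂ := fun k => Complex.exp (z * ((m : ℂ) * (k : ℂ))) with hg
  have hnormg : ∀ k, ‖g k‖ = (Real.exp t) ^ (m * k) := by
    intro k
    have hre : (z * ((m : ℂ) * (k : ℂ))).re = ((m * k : ℕ) : ℝ) * t := by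
      simp [Complex.mul_re, Complex.mul_im]
      push_cast
      ring
    rw [hg]
    simp only [Complex.norm_exp, hre]
    rw [Real.exp_nat_mul]
  -- summability of the weighted norms
  have hr1 : (q * Real.exp t) ^ m < 1 := pow_lt_one₀ hqe0 hz hm
  have hr0 : 0 ≤ (q * Real.exp t) ^ m := by positivity
  have hterm : ∀ k, ‖g k‖ * ((1 - q ^ m) * q ^ (m * k))
      = (1 - q ^ m) * ((q * Real.exp t) ^ m) ^ k := by
    intro k
    rw [hnormg k, ← pow_mul, mul_pow]
    ring
  have hsum : Summable (fun k : ℕ => (1 - q ^ m) * ((q * Real.exp t) ^ m) ^ k) :=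
    (summable_geometric_of_lt_one hr0 hr1).mul_left _
  have hnn : ∀ k : ℕ, (0:ℝ) ≤ (1 - q ^ m) * ((q * Real.exp t) ^ m) ^ k := by
    intro k
    have : 0 ≤ 1 - q ^ m := by linarith
    positivity
  -- integrability of g wrt ν
  have hgint : Integrable g ν := by
    refine ⟨(measurable_of_countable g).aestronglyMeasurable, ?_⟩
    rw [hasFiniteIntegral_iff_norm]
    calc (∫⁻ k, ENNReal.ofReal ‖g k‖ ∂ν)
        = ∑' k, ENNReal.ofReal ‖g k‖ * ν {k} := lintegral_countable' _
      _ = ∑' k, ENNReal.ofReal ((1 - q ^ m) * ((q * Real.exp t) ^ m) ^ k) := by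
          refine tsum_congr fun k => ?_
          rw [hνk k, ← ENNReal.ofReal_mul (norm_nonneg _), hterm k]
      _ = ENNReal.ofReal (∑' k, (1 - q ^ m) * ((q * Real.exp t) ^ m) ^ k) :=
          (ENNReal.ofReal_tsum_of_nonneg hnn hsum).symm
      _ < ⊤ := ENNReal.ofReal_lt_top
  -- the integral over ν
  set ρ : ℂ := (q : ℂ) ^ m * Complex.exp ((m : ℂ) * z) with hρ
  have hρnorm : ‖ρ‖ = (q * Real.exp t) ^ m := by
    rw [hρ]
    have h1 : ‖(q:ℂ) ^ m‖ = q ^ m := by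
      rw [norm_pow, Complex.norm_real, Real.norm_of_nonneg hq0.le]
    have h2 : ‖Complex.exp ((m : ℂ) * z)‖ = Real.exp t ^ m := by
      have : ((m : ℂ) * z).re = (m : ℝ) * t := by simp [Complex.mul_re, htdef]
      simp only [Complex.norm_exp, this]
      rw [← Real.exp_nat_mul]
    rw [norm_mul, h1, h2, mul_pow]
  have hρ1 : ‖ρ‖ < 1 := by rw [hρnorm]; exact hr1
  have hgval : ∀ k : ℕ, g k = (Complex.exp ((m : ℂ) * z)) ^ k := by
    intro k
    rw [hg, ← Complex.exp_nat_mul]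
    ring_nf
  have hint_val : ∫ k, g k ∂ν = (1 - (q : ℂ) ^ m) / (1 - ρ) := by
    rw [integral_countable' hgint]
    have : ∀ k : ℕ, (ν {k}).toReal • g k = ((1 : ℂ) - (q:ℂ) ^ m) * ρ ^ k := by
      intro k
      rw [hνk k, ENNReal.toReal_ofReal (by
        have : 0 ≤ 1 - q ^ m := by linarith
        positivity), hgval k, hρ, mul_pow, ← pow_mul]
      rw [Complex.real_smul]
      push_cast
      ring
    simp only [measureReal_def]
    rw [tsum_congr this, tsum_mul_left, tsum_geometric_of_norm_lt_one hρ1, div_eq_mul_inv]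
  -- transport back to Ω
  have hgasm : AEStronglyMeasurable g ν := (measurable_of_countable g).aestronglyMeasurable
  have hcomp : (fun ω => Complex.exp (z * ((m : ℂ) * (X ω : ℂ)))) = g ∘ X := rfl
  constructor
  · rw [hcomp]
    exact (integrable_map_measure hgasm hX.aemeasurable).mp hgint
  · rw [hcomp]
    have h5 := integral_map (hX.aemeasurable) hgasm
    calc integral μ (g ∘ X) = ∫ x, g (X x) ∂μ := rfl
      _ = ∫ y, g y ∂ν := h5.symm
      _ = _ := hint_val
lemma stmt8_finite {Ω : Type*} {mΩ : MeasurableSpace Ω} {μ : Measure Ω}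
    [IsProbabilityMeasure μ] {q : ℝ} (hq0 : 0 < q) (hq1 : q < 1)
    {Y : ℕ → Ω → ℕ} (hmeas : ∀ n, Measurable (Y n))
    (hindep : iIndepFun Y μ)
    (hlaw : ∀ n k : ℕ, μ {ω | Y n ω = k}
      = ENNReal.ofReal ((1 - q ^ (n+1)) * q ^ ((n+1) * k)))
    {z : ℂ} (hz : q * Real.exp z.re < 1) (N : ℕ) :
    Integrable (fun ω =>
      Complex.exp (z * ((∑ n ∈ Finset.range N, ((n+1:ℝ) * (Y n ω : ℝ))) : ℝ))) μ ∧
    ∫ ω, Complex.exp (z * ((∑ n ∈ Finset.range N, ((n+1:ℝ) * (Y n ω : ℝ))) : ℝ)) ∂μ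
      = ∏ n ∈ Finset.range N,
          ((1 - (q:ℂ)^(n+1)) / (1 - (q:ℂ)^(n+1) * Complex.exp (((n+1:ℕ):ℂ) * z))) := by
  classical
  set φ : ℕ → ℕ → ℂ := fun n k => Complex.exp (z * (((n+1:ℕ):ℂ) * (k : ℂ))) with hφ
  set G : ℕ → Ω → ℂ := fun n => (φ n) ∘ (Y n) with hG
  have hGmeas : ∀ n, Measurable (G n) := fun n => (measurable_of_countable (φ n)).comp (hmeas n)
  have hGindep : iIndepFun G μ :=
    hindep.comp φ (fun n => measurable_of_countable _)
  have hsingle : ∀ n, Integrable (G n) μ ∧ ∫ ω, G n ω ∂μ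
      = (1 - (q:ℂ)^(n+1)) / (1 - (q:ℂ)^(n+1) * Complex.exp (((n+1:ℕ):ℂ) * z)) :=
    fun n => stmt8_single hq0 hq1 (hmeas n) (Nat.succ_ne_zero n) (hlaw n) hz
  have key : ∀ M : ℕ, Integrable (fun ω => ∏ n ∈ Finset.range M, G n ω) μ ∧
      ∫ ω, ∏ n ∈ Finset.range M, G n ω ∂μ = ∏ n ∈ Finset.range M,
        ((1 - (q:ℂ)^(n+1)) / (1 - (q:ℂ)^(n+1) * Complex.exp (((n+1:ℕ):ℂ) * z))) := by
    intro M
    induction M with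
    | zero => simp
    | succ M ih =>
      have hprodeq : (∏ j ∈ Finset.range M, G j) = fun ω => ∏ j ∈ Finset.range M, G j ω := by
        funext ω; simp
      have hindepN : IndepFun (fun ω => ∏ j ∈ Finset.range M, G j ω) (G M) μ := by
        rw [← hprodeq]; exact hGindep.indepFun_prod_range_succ hGmeas M
      have hpm : Measurable (fun ω => ∏ j ∈ Finset.range M, G j ω) :=
        Finset.measurable_prod _ (fun i _ => hGmeas i)
      constructor
      · have h2 := hindepN.integrable_mul ih.1 (hsingle M).1
        refine h2.congr (Filter.Eventually.of_forall fun ω => ?_)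
        simp [Finset.prod_range_succ]
      · simp_rw [Finset.prod_range_succ]
        rw [show (∫ ω, (∏ n ∈ Finset.range M, G n ω) * G M ω ∂μ)
            = (∫ ω, ∏ n ∈ Finset.range M, G n ω ∂μ) * ∫ ω, G M ω ∂μ from
          stmt8_integral_mul hindepN hpm.aemeasurable ((hGmeas M).aemeasurable), ih.2,
          (hsingle M).2]
  have hconv : ∀ ω, Complex.exp (z * ((∑ n ∈ Finset.range N, ((n+1:ℝ) * (Y n ω : ℝ))) : ℝ))
      = ∏ n ∈ Finset.range N, G n ω := by
    intro ω
    have h1 : z * ((∑ n ∈ Finset.range N, ((n+1:ℝ) * (Y n ω : ℝ))) : ℝ)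
        = ∑ n ∈ Finset.range N, z * (((n+1:ℕ):ℂ) * ((Y n ω : ℕ) : ℂ)) := by
      push_cast
      rw [Finset.mul_sum]
    rw [h1, Complex.exp_sum]
    rfl
  have heq : (fun ω => Complex.exp (z * ((∑ n ∈ Finset.range N, ((n+1:ℝ) * (Y n ω : ℝ))) : ℝ)))
      = fun ω => ∏ n ∈ Finset.range N, G n ω := funext hconv
  rw [heq]
  exact key N
open MeasureTheory ProbabilityTheory Filter

lemma stmt8_multipliable {q : ℝ} (hq0 : 0 < q) (hq1 : q < 1) {z : ℂ}
    (hz : q * Real.exp z.re < 1) :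
    Multipliable (fun n : ℕ =>
      (1 - (q:ℂ)^(n+1)) / (1 - (q:ℂ)^(n+1) * Complex.exp (((n+1:ℕ):ℂ) * z))) := by
  set b : ℝ := max (q * Real.exp z.re) q with hb
  have hb0 : 0 ≤ b := le_trans hq0.le (le_max_right _ _)
  have hb1 : b < 1 := max_lt hz hq1
  set F : ℕ → ℂ := fun n =>
    (1 - (q:ℂ)^(n+1)) / (1 - (q:ℂ)^(n+1) * Complex.exp (((n+1:ℕ):ℂ) * z)) with hF
  have hqc : ∀ n : ℕ, ‖(q:ℂ)^(n+1)‖ = q^(n+1) := by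
    intro n; rw [norm_pow, Complex.norm_real, Real.norm_of_nonneg hq0.le]
  have hqb : ∀ n : ℕ, q^(n+1) ≤ b^(n+1) := fun n =>
    pow_le_pow_left₀ hq0.le (le_max_right _ _) _
  have hexpnorm : ∀ n : ℕ, ‖(q:ℂ)^(n+1) * Complex.exp (((n+1:ℕ):ℂ) * z)‖ ≤ b^(n+1) := by
    intro n
    rw [norm_mul, hqc]
    have h1 : ‖Complex.exp (((n+1:ℕ):ℂ) * z)‖ = Real.exp z.re ^ (n+1) := by
      have h2 : ((((n+1:ℕ)):ℂ) * z).re = ((n+1:ℕ):ℝ) * z.re := by simp [Complex.mul_re]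
      simp only [Complex.norm_exp, h2]
      rw [Real.exp_nat_mul]
    rw [h1, ← mul_pow]
    exact pow_le_pow_left₀ (by positivity) (le_max_left _ _) _
  have hbp : ∀ n : ℕ, b^(n+1) ≤ b := fun n => pow_le_of_le_one hb0 hb1.le (Nat.succ_ne_zero n)
  have hAne : ∀ n, (1:ℂ) - (q:ℂ)^(n+1) ≠ 0 := by
    intro n h
    have h2 : (q:ℂ)^(n+1) = 1 := by
      have := sub_eq_zero.mp h; exact this.symm
    have h3 : q^(n+1) = 1 := by rw [← hqc n, h2, norm_one]
    have h4 : q^(n+1) < 1 := pow_lt_one₀ hq0.le hq1 (Nat.succ_ne_zero n)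
    linarith
  have hBne : ∀ n, (1:ℂ) - (q:ℂ)^(n+1) * Complex.exp (((n+1:ℕ):ℂ) * z) ≠ 0 := by
    intro n h
    have h2 := sub_eq_zero.mp h
    have h3 : (1:ℝ) ≤ b^(n+1) := by
      calc (1:ℝ) = ‖(1:ℂ)‖ := norm_one.symm
        _ = ‖(q:ℂ)^(n+1) * Complex.exp (((n+1:ℕ):ℂ) * z)‖ := by rw [h2]
        _ ≤ b^(n+1) := hexpnorm n
    have h4 : b^(n+1) < 1 := pow_lt_one₀ hb0 hb1 (Nat.succ_ne_zero n)
    linarith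
  have hBlb : ∀ n, 1 - b ≤ ‖(1:ℂ) - (q:ℂ)^(n+1) * Complex.exp (((n+1:ℕ):ℂ) * z)‖ := by
    intro n
    calc 1 - b ≤ 1 - b^(n+1) := by linarith [hbp n]
      _ ≤ ‖(1:ℂ)‖ - ‖(q:ℂ)^(n+1) * Complex.exp (((n+1:ℕ):ℂ) * z)‖ := by
          rw [norm_one]; linarith [hexpnorm n]
      _ ≤ _ := norm_sub_norm_le _ _
  have hb1' : 0 < 1 - b := by linarith
  have hu : ∀ n, ‖F n - 1‖ ≤ 2 * b^(n+1) / (1-b) := by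
    intro n
    have hdiff : F n - 1 = ((1 - (q:ℂ)^(n+1)) - (1 - (q:ℂ)^(n+1)
        * Complex.exp (((n+1:ℕ):ℂ) * z))) / (1 - (q:ℂ)^(n+1)
        * Complex.exp (((n+1:ℕ):ℂ) * z)) := by
      simp only [hF]
      exact div_sub_one (hBne n)
    rw [hdiff, norm_div]
    have hnum : ‖(1 - (q:ℂ)^(n+1)) - (1 - (q:ℂ)^(n+1)
        * Complex.exp (((n+1:ℕ):ℂ) * z))‖ ≤ 2 * b^(n+1) := by
      have h5 : (1 - (q:ℂ)^(n+1)) - (1 - (q:ℂ)^(n+1) * Complex.exp (((n+1:ℕ):ℂ) * z))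
          = (q:ℂ)^(n+1) * Complex.exp (((n+1:ℕ):ℂ) * z) - (q:ℂ)^(n+1) := by ring
      rw [h5]
      calc ‖_ - _‖ ≤ ‖(q:ℂ)^(n+1) * Complex.exp (((n+1:ℕ):ℂ) * z)‖ + ‖(q:ℂ)^(n+1)‖ :=
            norm_sub_le _ _
        _ ≤ b^(n+1) + b^(n+1) := add_le_add (hexpnorm n) (by rw [hqc]; exact hqb n)
        _ = 2 * b^(n+1) := by ring
    exact div_le_div₀ (by positivity) hnum hb1' (hBlb n)
  have hFne : ∀ n, F n ≠ 0 := fun n => div_ne_zero (hAne n) (hBne n)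
  have hsum : Summable (fun n : ℕ => (3/(1-b)) * b^(n+1)) := by
    have : Summable (fun n : ℕ => b ^ n) := summable_geometric_of_lt_one hb0 hb1
    simpa [pow_succ, mul_comm, mul_assoc, mul_left_comm] using (this.mul_left ((3/(1-b)) * b))
  have hlog : Summable (fun n => Complex.log (F n)) := by
    apply Summable.of_norm_bounded_eventually_nat (g := fun n => (3/(1-b)) * b^(n+1)) hsum
    have hev : ∀ᶠ n in atTop, b^n < (1-b)/4 := by
      have h6 := tendsto_pow_atTop_nhds_zero_of_lt_one hb0 hb1
      exact h6.eventually_lt_const (by positivity)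
    filter_upwards [hev] with n hn
    have hbn : b^(n+1) ≤ b^n := by
      rw [pow_succ]
      nlinarith [pow_nonneg hb0 n]
    have hun : ‖F n - 1‖ ≤ 1/2 := by
      have := hu n
      have h7 : 2 * b^(n+1) / (1-b) ≤ 1/2 := by
        rw [div_le_iff₀ hb1']
        nlinarith
      linarith
    have h8 : ‖Complex.log (F n)‖ ≤ 3/2 * ‖F n - 1‖ := by
      have := Complex.norm_log_one_add_half_le_self hun
      rwa [show (1:ℂ) + (F n - 1) = F n by ring] at this
    calc ‖Complex.log (F n)‖ ≤ 3/2 * ‖F n - 1‖ := h8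
      _ ≤ 3/2 * (2 * b^(n+1) / (1-b)) := by linarith [hu n, norm_nonneg (F n - 1)]
      _ = (3/(1-b)) * b^(n+1) := by ring
  exact Complex.multipliable_of_summable_log hlog
open MeasureTheory ProbabilityTheory Filter

lemma stmt8_real_bound {q t' : ℝ} (hq0 : 0 < q) (hq1 : q < 1) (ht'0 : 0 ≤ t')
    (ha : q * Real.exp t' < 1) (N : ℕ) :
    ∏ n ∈ Finset.range N, (1 - q^(n+1)) / (1 - q^(n+1) * Real.exp (((n+1:ℕ):ℝ) * t'))
      ≤ Real.exp (∑' n : ℕ, (q * Real.exp t')^(n+1) / (1 - q * Real.exp t')) := by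
  set a := q * Real.exp t' with hadef
  have ha0 : 0 < a := by positivity
  have ha1 : 0 < 1 - a := by linarith
  have hd : ∀ n : ℕ, q^(n+1) * Real.exp (((n+1:ℕ):ℝ) * t') = a^(n+1) := by
    intro n
    rw [Real.exp_nat_mul, hadef, mul_pow]
  have hdlt : ∀ n : ℕ, a^(n+1) < 1 := fun n => pow_lt_one₀ ha0.le (by linarith) (Nat.succ_ne_zero n)
  have hdle : ∀ n : ℕ, a^(n+1) ≤ a := fun n => pow_le_of_le_one ha0.le (by linarith) (Nat.succ_ne_zero n)
  have hq1n : ∀ n : ℕ, q^(n+1) < 1 := fun n => pow_lt_one₀ hq0.le hq1 (Nat.succ_ne_zero n)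
  have hfac : ∀ n : ℕ, (1 - q^(n+1)) / (1 - q^(n+1) * Real.exp (((n+1:ℕ):ℝ) * t'))
      ≤ Real.exp (a^(n+1) / (1 - a)) := by
    intro n
    rw [hd n]
    have h1 : (1 - q^(n+1)) / (1 - a^(n+1)) ≤ 1 + a^(n+1)/(1-a) := by
      rw [div_le_iff₀ (by linarith [hdlt n])]
      have h2 : 0 ≤ a^(n+1) * (a - a^(n+1)) :=
        mul_nonneg (by positivity) (by linarith [hdle n])
      have h3 : 0 < q^(n+1) := by positivity
      have h4 : 0 ≤ a^(n+1) := by positivity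
      have h5 : (1 + a^(n+1)/(1-a)) * (1 - a^(n+1)) - 1
          = (a^(n+1) * (a - a^(n+1))) / (1-a) := by
        field_simp
        ring
      nlinarith [div_nonneg h2 ha1.le]
    calc (1 - q^(n+1)) / (1 - a^(n+1)) ≤ 1 + a^(n+1)/(1-a) := h1
      _ ≤ Real.exp (a^(n+1)/(1-a)) := by
          have := Real.add_one_le_exp (a^(n+1)/(1-a))
          linarith
  have hsummable : Summable (fun n : ℕ => a^(n+1) / (1-a)) := by
    have h6 : Summable (fun n : ℕ => a ^ n) := summable_geometric_of_lt_one ha0.le (by linarith)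
    simpa [pow_succ, div_eq_mul_inv, mul_comm, mul_assoc, mul_left_comm] using
      (h6.mul_left (a * (1-a)⁻¹))
  calc ∏ n ∈ Finset.range N, (1 - q^(n+1)) / (1 - q^(n+1) * Real.exp (((n+1:ℕ):ℝ) * t'))
      ≤ ∏ n ∈ Finset.range N, Real.exp (a^(n+1) / (1 - a)) := by
        apply Finset.prod_le_prod
        · intro n _
          apply div_nonneg (by linarith [hq1n n])
          rw [hd n]; linarith [hdlt n]
        · intro n _; exact hfac n
    _ = Real.exp (∑ n ∈ Finset.range N, a^(n+1) / (1-a)) := (Real.exp_sum _ _).symm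
    _ ≤ Real.exp (∑' n : ℕ, a^(n+1) / (1-a)) := by
        apply Real.exp_le_exp.mpr
        exact hsummable.sum_le_tsum _ (fun i _ => by positivity)

open Filter Topology in
theorem stmt8 {Ω : Type*} [MeasureSpace Ω] [IsProbabilityMeasure (ℙ : Measure Ω)]
    (q : ℝ) (hq : q ∈ Set.Ioo (0:ℝ) 1)
    (Y : ℕ → Ω → ℕ) (hmeas : ∀ n, Measurable (Y n))
    (hindep : iIndepFun Y ℙ)
    (hlaw : ∀ n k : ℕ, ℙ {ω | Y n ω = k}
      = ENNReal.ofReal ((1 - q ^ (n+1)) * q ^ ((n+1) * k))) :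
    (∀ᵐ ω ∂ℙ, Summable (fun n : ℕ => ((n+1 : ℝ) * (Y n ω : ℝ)))) ∧
    ∀ z : ℂ, z.re < -Real.log q →
      (∫ ω, Complex.exp (z * ((∑' n : ℕ, ((n+1 : ℝ) * (Y n ω : ℝ))) : ℝ)) ∂ℙ)
        = ∏' n : ℕ, ((1 - (q:ℂ) ^ (n+1)) / (1 - (q:ℂ) ^ (n+1) * Complex.exp ((n+1 : ℕ) * z))) := by
  obtain ⟨hq0, hq1⟩ := hq
  have hsummable_geo : Summable (fun n : ℕ => q ^ (n+1)) := by
    simpa [pow_succ] using (summable_geometric_of_lt_one hq0.le hq1).mul_right q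
  -- Borel–Cantelli: almost surely only finitely many Y n are nonzero
  have hPne : ∀ n, ℙ {ω | Y n ω ≠ 0} = ENNReal.ofReal (q^(n+1)) := by
    intro n
    have hms : MeasurableSet {ω | Y n ω = 0} := (hmeas n) (measurableSet_singleton 0)
    have h0 : ℙ {ω | Y n ω = 0} = ENNReal.ofReal (1 - q^(n+1)) := by
      simpa using hlaw n 0
    have hcompl : {ω | Y n ω ≠ 0} = {ω | Y n ω = 0}ᶜ := rfl
    rw [hcompl, measure_compl hms (measure_ne_top _ _), measure_univ, h0]
    have hle : q^(n+1) ≤ 1 := (pow_lt_one₀ hq0.le hq1 (Nat.succ_ne_zero n)).le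
    rw [← ENNReal.ofReal_one, ← ENNReal.ofReal_sub _ (by linarith : (0:ℝ) ≤ 1 - q^(n+1))]
    congr 1
    ring
  have htsum_ne : (∑' n, ℙ {ω | Y n ω ≠ 0}) ≠ ⊤ := by
    simp_rw [hPne]
    rw [← ENNReal.ofReal_tsum_of_nonneg (fun n => by positivity) hsummable_geo]
    exact ENNReal.ofReal_ne_top
  have hae_sum : ∀ᵐ ω ∂ℙ, Summable (fun n : ℕ => ((n+1 : ℝ) * (Y n ω : ℝ))) := by
    filter_upwards [MeasureTheory.ae_eventually_notMem htsum_ne] with ω hω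
    rw [Filter.eventually_atTop] at hω
    obtain ⟨N, hN⟩ := hω
    apply summable_of_ne_finset_zero (s := Finset.range N)
    intro n hn
    have h1 : Y n ω = 0 := by
      have hNn : N ≤ n := le_of_not_gt (fun h => hn (Finset.mem_range.mpr h))
      have := hN n hNn
      simpa using this
    simp [h1]
  refine ⟨hae_sum, ?_⟩
  intro z hz
  have hlogq : Real.log q < 0 := Real.log_neg hq0 hq1
  set t' : ℝ := max z.re 0 with ht'def
  have ht'0 : 0 ≤ t' := le_max_right _ _
  have ht' : t' < -Real.log q := max_lt hz (by linarith)
  have haz' : q * Real.exp t' < 1 := by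
    have h1 : Real.exp t' < Real.exp (-Real.log q) := Real.exp_lt_exp.mpr ht'
    rw [Real.exp_neg, Real.exp_log hq0] at h1
    calc q * Real.exp t' < q * q⁻¹ := (mul_lt_mul_iff_right₀ hq0).mpr h1
      _ = 1 := mul_inv_cancel₀ hq0.ne'
  have haz : q * Real.exp z.re < 1 := by
    have h1 : Real.exp z.re ≤ Real.exp t' := Real.exp_le_exp.mpr (le_max_left _ _)
    nlinarith [Real.exp_pos z.re]
  have hazc : q * Real.exp ((t' : ℂ)).re < 1 := by simpa using haz'
  have hfinite := fun (w : ℂ) (hw : q * Real.exp w.re < 1) (N : ℕ) =>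
    stmt8_finite hq0 hq1 hmeas hindep hlaw hw N
  have hterm_nonneg : ∀ (n : ℕ) (ω : Ω), (0:ℝ) ≤ (n+1:ℝ) * (Y n ω : ℝ) := fun n ω => by
    positivity
  have hSmeas : ∀ N, Measurable (fun ω => ∑ n ∈ Finset.range N, ((n+1:ℝ) * (Y n ω : ℝ))) :=
    fun N => Finset.measurable_sum _ (fun n _ =>
      ((measurable_of_countable (fun k : ℕ => (k:ℝ))).comp (hmeas n)).const_mul _)
  have hTmeas : AEMeasurable (fun ω => ∑' n : ℕ, ((n+1:ℝ) * (Y n ω : ℝ))) ℙ := by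
    apply aemeasurable_of_tendsto_metrizable_ae atTop (fun N => (hSmeas N).aemeasurable)
    filter_upwards [hae_sum] with ω hω
    exact hω.hasSum.tendsto_sum_nat
  have hnormexp : ∀ (w : ℂ) (x : ℝ), ‖Complex.exp (w * (x:ℂ))‖ = Real.exp (w.re * x) := by
    intro w x
    rw [Complex.norm_exp]
    congr 1
    simp [Complex.mul_re]
  -- real-valued integrals of the partial sums
  have hRint : ∀ N, Integrable
      (fun ω => Real.exp (t' * ∑ n ∈ Finset.range N, ((n+1:ℝ) * (Y n ω : ℝ)))) ℙ := by
    intro N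
    have h1 := ((hfinite (t' : ℂ) hazc N).1).norm
    refine h1.congr (Filter.Eventually.of_forall fun ω => ?_)
    simp only [hnormexp]
    simp
  have hRval : ∀ N, ∫ ω, Real.exp (t' * ∑ n ∈ Finset.range N, ((n+1:ℝ) * (Y n ω : ℝ))) ∂ℙ
      = ∏ n ∈ Finset.range N, (1 - q^(n+1)) / (1 - q^(n+1) * Real.exp (((n+1:ℕ):ℝ) * t')) := by
    intro N
    have hc := (hfinite (t' : ℂ) hazc N).2
    have h1 : (fun ω => Complex.exp ((t':ℂ) * ((∑ n ∈ Finset.range N,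
        ((n+1:ℝ) * (Y n ω : ℝ))) : ℝ))) = fun ω => ((Real.exp (t' * ∑ n ∈ Finset.range N,
        ((n+1:ℝ) * (Y n ω : ℝ))) : ℝ) : ℂ) := by
      funext ω
      rw [Complex.ofReal_exp]
      norm_cast
    have h2 : ∀ n : ℕ, (1 - (q:ℂ)^(n+1)) / (1 - (q:ℂ)^(n+1)
        * Complex.exp (((n+1:ℕ):ℂ) * (t':ℂ)))
        = (((1 - q^(n+1)) / (1 - q^(n+1) * Real.exp (((n+1:ℕ):ℝ) * t')) : ℝ) : ℂ) := by
      intro n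
      have h3 : Complex.exp (((n+1:ℕ):ℂ) * (t':ℂ))
          = ((Real.exp (((n+1:ℕ):ℝ) * t') : ℝ) : ℂ) := by
        rw [Complex.ofReal_exp]
        norm_cast
      rw [h3]
      norm_cast
    have h6 : ∫ ω, ((Real.exp (t' * ∑ n ∈ Finset.range N, ((n+1:ℝ) * (Y n ω : ℝ))) : ℝ) : ℂ) ∂ℙ
        = ((∫ ω, Real.exp (t' * ∑ n ∈ Finset.range N, ((n+1:ℝ) * (Y n ω : ℝ))) ∂ℙ : ℝ) : ℂ) :=
      integral_ofReal
    rw [h1, h6, Finset.prod_congr rfl (fun n _ => h2 n), ← Complex.ofReal_prod] at hc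
    exact_mod_cast hc
  -- the dominating function is integrable (monotone convergence)
  have hbound_int : Integrable
      (fun ω => Real.exp (t' * ∑' n : ℕ, ((n+1:ℝ) * (Y n ω : ℝ)))) ℙ := by
    constructor
    · exact (Real.measurable_exp.comp_aemeasurable (hTmeas.const_mul t')).aestronglyMeasurable
    · rw [hasFiniteIntegral_iff_ofReal (Eventually.of_forall fun ω => (Real.exp_pos _).le)]
      have hmct : Tendsto (fun N => ∫⁻ ω, ENNReal.ofReal
          (Real.exp (t' * ∑ n ∈ Finset.range N, ((n+1:ℝ) * (Y n ω : ℝ)))) ∂ℙ) atTop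
          (𝓝 (∫⁻ ω, ENNReal.ofReal
            (Real.exp (t' * ∑' n : ℕ, ((n+1:ℝ) * (Y n ω : ℝ)))) ∂ℙ)) := by
        apply lintegral_tendsto_of_tendsto_of_monotone
        · intro N
          exact (ENNReal.measurable_ofReal.comp
            (Real.measurable_exp.comp ((hSmeas N).const_mul t'))).aemeasurable
        · apply Eventually.of_forall
          intro ω N M hNM
          apply ENNReal.ofReal_le_ofReal
          apply Real.exp_le_exp.mpr
          apply mul_le_mul_of_nonneg_left _ ht'0
          apply Finset.sum_le_sum_of_subset_of_nonneg
            (Finset.range_subset_range.mpr hNM) (fun i _ _ => hterm_nonneg i ω)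
        · filter_upwards [hae_sum] with ω hω
          have h2 := hω.hasSum.tendsto_sum_nat
          exact (ENNReal.continuous_ofReal.tendsto _).comp
            ((Real.continuous_exp.tendsto _).comp (h2.const_mul t'))
      have hle : ∀ N, ∫⁻ ω, ENNReal.ofReal
          (Real.exp (t' * ∑ n ∈ Finset.range N, ((n+1:ℝ) * (Y n ω : ℝ)))) ∂ℙ
          ≤ ENNReal.ofReal (Real.exp (∑' n : ℕ,
            (q * Real.exp t')^(n+1) / (1 - q * Real.exp t'))) := by
        intro N
        rw [← ofReal_integral_eq_lintegral_ofReal (hRint N)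
          (Eventually.of_forall fun ω => (Real.exp_pos _).le)]
        apply ENNReal.ofReal_le_ofReal
        rw [hRval N]
        exact stmt8_real_bound hq0 hq1 ht'0 haz' N
      exact lt_of_le_of_lt (le_of_tendsto' hmct hle) ENNReal.ofReal_lt_top
  -- dominated convergence
  have hDCT : Tendsto (fun N => ∫ ω, Complex.exp (z * ((∑ n ∈ Finset.range N,
      ((n+1:ℝ) * (Y n ω : ℝ))) : ℝ)) ∂ℙ) atTop
      (𝓝 (∫ ω, Complex.exp (z * ((∑' n : ℕ, ((n+1 : ℝ) * (Y n ω : ℝ))) : ℝ)) ∂ℙ)) := by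
    apply tendsto_integral_of_dominated_convergence
      (bound := fun ω => Real.exp (t' * ∑' n : ℕ, ((n+1:ℝ) * (Y n ω : ℝ))))
    · intro N
      exact ((hfinite z haz N).1).aestronglyMeasurable
    · exact hbound_int
    · intro N
      filter_upwards [hae_sum] with ω hω
      rw [hnormexp]
      apply Real.exp_le_exp.mpr
      have hSn : 0 ≤ ∑ n ∈ Finset.range N, ((n+1:ℝ) * (Y n ω : ℝ)) :=
        Finset.sum_nonneg fun i _ => hterm_nonneg i ω
      have hST : ∑ n ∈ Finset.range N, ((n+1:ℝ) * (Y n ω : ℝ))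
          ≤ ∑' n : ℕ, ((n+1:ℝ) * (Y n ω : ℝ)) :=
        hω.sum_le_tsum _ (fun i _ => hterm_nonneg i ω)
      calc z.re * ∑ n ∈ Finset.range N, ((n+1:ℝ) * (Y n ω : ℝ))
          ≤ t' * ∑ n ∈ Finset.range N, ((n+1:ℝ) * (Y n ω : ℝ)) :=
            mul_le_mul_of_nonneg_right (le_max_left _ _) hSn
        _ ≤ t' * ∑' n : ℕ, ((n+1:ℝ) * (Y n ω : ℝ)) := mul_le_mul_of_nonneg_left hST ht'0
    · filter_upwards [hae_sum] with ω hω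
      have h2 := hω.hasSum.tendsto_sum_nat
      exact (Complex.continuous_exp.tendsto _).comp
        (((Complex.continuous_ofReal.tendsto _).comp h2).const_mul z)
  have hvals : (fun N => ∫ ω, Complex.exp (z * ((∑ n ∈ Finset.range N,
      ((n+1:ℝ) * (Y n ω : ℝ))) : ℝ)) ∂ℙ)
      = fun N => ∏ n ∈ Finset.range N,
        ((1 - (q:ℂ)^(n+1)) / (1 - (q:ℂ)^(n+1) * Complex.exp (((n+1:ℕ):ℂ) * z))) :=
    funext fun N => (hfinite z haz N).2
  rw [hvals] at hDCT
  exact tendsto_nhds_unique hDCT (stmt8_multipliable hq0 hq1 haz).hasProd.tendsto_prod_nat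
end

section
/- As q → 1⁻, Σ_{n=1}^∞ n³ (q^n + q^{2n}) / (1-q^n)³ ~ 6 ζ(2)/(1-q)⁴. -/
open Filter Topology

lemma cast_c3 (n : ℕ) : (((n+3).choose 3 : ℕ) : ℝ) = ((n:ℝ)+1)*((n:ℝ)+2)*((n:ℝ)+3)/6 := by
  induction n with
  | zero => norm_num
  | succ n ih =>
    have h2 : (((n+3).choose 2 : ℕ) : ℝ) = ((n:ℝ)+2)*((n:ℝ)+3)/2 := by
      rw [Nat.cast_choose_two]; push_cast; ring
    have h : (n+1+3) = (n+3)+1 := by ring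
    rw [h, Nat.choose_succ_succ (n+3) 2, Nat.cast_add, h2, ih]
    push_cast; ring

lemma hasSumA (x : ℝ) (h0 : 0 ≤ x) (h1 : x < 1) :
    HasSum (fun k : ℕ => ((k:ℝ)+1)^2 * x^(k+1)) ((x + x^2)/(1-x)^3) := by
  have hx : ‖x‖ < 1 := by rwa [Real.norm_eq_abs, abs_of_nonneg h0]
  have hne : (1:ℝ) - x ≠ 0 := by nlinarith
  have h2 := hasSum_choose_mul_geometric_of_norm_lt_one 2 hx
  have h1s := hasSum_choose_mul_geometric_of_norm_lt_one 1 hx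
  have h := ((h2.mul_left 2).sub h1s).mul_left x
  convert h using 1
  · rfl
  · funext n
    rw [Nat.cast_choose_two, Nat.choose_one_right]
    push_cast
    ring
  · field_simp
    ring

lemma hasSumB (x : ℝ) (h0 : 0 ≤ x) (h1 : x < 1) :
    HasSum (fun n : ℕ => ((n:ℝ)+1)^3 * x^(n+1)) ((x + 4*x^2 + x^3)/(1-x)^4) := by
  have hx : ‖x‖ < 1 := by rwa [Real.norm_eq_abs, abs_of_nonneg h0]
  have hne : (1:ℝ) - x ≠ 0 := by nlinarith
  have h3 := hasSum_choose_mul_geometric_of_norm_lt_one 3 hx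
  have h2 := hasSum_choose_mul_geometric_of_norm_lt_one 2 hx
  have h1s := hasSum_choose_mul_geometric_of_norm_lt_one 1 hx
  have h := (((h3.mul_left 6).sub (h2.mul_left 6)).add h1s).mul_left x
  convert h using 1
  · rfl
  · funext n
    rw [Nat.cast_choose_two, Nat.choose_one_right, cast_c3]
    push_cast
    ring
  · field_simp
    ring

lemma summable_a {q : ℝ} (h0 : 0 < q) (h1 : q < 1) :
    Summable (fun p : ℕ × ℕ =>
      ((p.1:ℝ)+1)^3 * ((p.2:ℝ)+1)^2 * q^((p.1+1)*(p.2+1))) := by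
  have hq : ‖q‖ < 1 := by rwa [Real.norm_eq_abs, abs_of_nonneg h0.le]
  have hf : Summable (fun n : ℕ => ((n:ℝ)+1)^3 * q^(n+1)) := by
    have := (_root_.summable_nat_add_iff 1).2
      (summable_pow_mul_geometric_of_norm_lt_one (R := ℝ) 3 hq)
    exact this.congr (fun n => by push_cast; ring)
  have hg : Summable (fun k : ℕ => ((k:ℝ)+1)^2 * q^(k+1)) := by
    have := (_root_.summable_nat_add_iff 1).2
      (summable_pow_mul_geometric_of_norm_lt_one (R := ℝ) 2 hq)
    exact this.congr (fun n => by push_cast; ring)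
  have hprod : Summable (fun p : ℕ × ℕ =>
      (1/q) * ((((p.1:ℝ)+1)^3 * q^(p.1+1)) * (((p.2:ℝ)+1)^2 * q^(p.2+1)))) :=
    (hf.mul_of_nonneg hg
      (fun n => by positivity) (fun k => by positivity)).mul_left _
  refine hprod.of_nonneg_of_le (fun p => by positivity) (fun p => ?_)
  obtain ⟨n, k⟩ := p
  have hle : q^((n+1)*(k+1)) ≤ q^(n+k+1) :=
    pow_le_pow_of_le_one h0.le h1.le (by nlinarith)
  have hmain : ((n:ℝ)+1)^3 * ((k:ℝ)+1)^2 * q^((n+1)*(k+1))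
      ≤ ((n:ℝ)+1)^3 * ((k:ℝ)+1)^2 * q^(n+k+1) := by
    have : (0:ℝ) ≤ ((n:ℝ)+1)^3 * ((k:ℝ)+1)^2 := by positivity
    exact mul_le_mul_of_nonneg_left hle this
  refine hmain.trans (le_of_eq ?_)
  have : q^(n+1) * q^(k+1) = q * q^(n+k+1) := by
    rw [← pow_add, ← pow_succ']
    ring_nf
  field_simp
  ring_nf

lemma tsum_swap_eq {q : ℝ} (h0 : 0 < q) (h1 : q < 1) :
    (∑' n : ℕ, ((n+1 : ℝ)^3 * (q^(n+1) + q^(2*(n+1))) / (1 - q^(n+1))^3))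
      = ∑' k : ℕ, ((k:ℝ)+1)^2 *
          ((q^(k+1) + 4*(q^(k+1))^2 + (q^(k+1))^3)/(1-q^(k+1))^4) := by
  have key := Summable.tsum_comm (f := fun n k : ℕ =>
      ((n:ℝ)+1)^3 * ((k:ℝ)+1)^2 * q^((n+1)*(k+1))) (summable_a h0 h1)
  calc (∑' n : ℕ, ((n+1 : ℝ)^3 * (q^(n+1) + q^(2*(n+1))) / (1 - q^(n+1))^3))
      = ∑' n : ℕ, ∑' k : ℕ, ((n:ℝ)+1)^3 * ((k:ℝ)+1)^2 * q^((n+1)*(k+1)) := by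
        refine tsum_congr (fun n => ?_)
        have hx0 : (0:ℝ) < q^(n+1) := pow_pos h0 _
        have hx1 : q^(n+1) < 1 := pow_lt_one₀ h0.le h1 (Nat.succ_ne_zero n)
        have hA := (hasSumA (q^(n+1)) hx0.le hx1).mul_left (((n:ℝ)+1)^3)
        have h2 : (fun k : ℕ => ((n:ℝ)+1)^3 * (((k:ℝ)+1)^2 * (q^(n+1))^(k+1)))
            = fun k : ℕ => ((n:ℝ)+1)^3 * ((k:ℝ)+1)^2 * q^((n+1)*(k+1)) := by
          funext k; rw [← pow_mul]; ring
        rw [h2] at hA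
        rw [hA.tsum_eq, mul_comm 2 (n+1), pow_mul]
        ring
      _ = ∑' k : ℕ, ∑' n : ℕ, ((n:ℝ)+1)^3 * ((k:ℝ)+1)^2 * q^((n+1)*(k+1)) := key.symm
      _ = _ := by
        refine tsum_congr (fun k => ?_)
        have hy0 : (0:ℝ) < q^(k+1) := pow_pos h0 _
        have hy1 : q^(k+1) < 1 := pow_lt_one₀ h0.le h1 (Nat.succ_ne_zero k)
        have hB := (hasSumB (q^(k+1)) hy0.le hy1).mul_left (((k:ℝ)+1)^2)
        have h2 : (fun n : ℕ => ((k:ℝ)+1)^2 * (((n:ℝ)+1)^3 * (q^(k+1))^(n+1)))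
            = fun n : ℕ => ((n:ℝ)+1)^3 * ((k:ℝ)+1)^2 * q^((n+1)*(k+1)) := by
          funext n; rw [← pow_mul, mul_comm (k+1) (n+1)]; ring
        rw [h2] at hB
        rw [hB.tsum_eq]

lemma F_bound {q : ℝ} (h0 : 0 < q) (h1 : q < 1) (k : ℕ) :
    ((k:ℝ)+1)^2 * ((q^(k+1) + 4*(q^(k+1))^2 + (q^(k+1))^3)/(1-q^(k+1))^4)
        * ((1-q)^4 / Real.pi^2)
      ≤ 24576 / (Real.pi^2 * ((k:ℝ)+1)^2) := by
  have hπ : (0:ℝ) < Real.pi^2 := by positivity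
  set m : ℝ := (k:ℝ)+1 with hm_def
  set u : ℝ := 1-q with hu_def
  set y : ℝ := q^(k+1) with hy_def
  have hm : (1:ℝ) ≤ m := by simp [hm_def]
  have hm0 : (0:ℝ) < m := lt_of_lt_of_le one_pos hm
  have hu0 : (0:ℝ) < u := by simp only [hu_def]; linarith
  have hu1 : u ≤ 1 := by simp only [hu_def]; linarith
  have hy0 : (0:ℝ) < y := pow_pos h0 _
  have hy1 : y < 1 := pow_lt_one₀ h0.le h1 (Nat.succ_ne_zero k)
  have hnum : y + 4*y^2 + y^3 ≤ 6*y := by nlinarith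
  have key : m^4 * ((y + 4*y^2 + y^3) * u^4) ≤ 24576 * (1-y)^4 := by
    rcases le_or_gt y (1/2) with hy | hy
    · set t : ℝ := m*u with ht_def
      have ht : 0 < t := mul_pos hm0 hu0
      have hq_exp : q ≤ Real.exp (-u) := by
        have := Real.add_one_le_exp (-u)
        simp only [hu_def] at this ⊢; linarith
      have hy_exp : y ≤ Real.exp (-t) := by
        have h1' : y ≤ (Real.exp (-u))^(k+1) := pow_le_pow_left₀ h0.le hq_exp _
        have h2' : (Real.exp (-u))^(k+1) = Real.exp (-t) := by
          rw [← Real.exp_nat_mul]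
          congr 1
          push_cast [ht_def, hm_def]
          ring
        linarith [h2'.le, h2'.ge]
      have hexp_big : t^4 / 256 ≤ Real.exp t := by
        have h14 : t/4 ≤ Real.exp (t/4) := by linarith [Real.add_one_le_exp (t/4)]
        have h24 : (t/4)^4 ≤ (Real.exp (t/4))^4 := pow_le_pow_left₀ (by linarith) h14 _
        rw [← Real.exp_nat_mul] at h24
        rw [show ((4:ℕ):ℝ)*(t/4) = t by push_cast; ring] at h24
        calc t^4/256 = (t/4)^4 := by ring
          _ ≤ _ := h24
      have ht4 : t^4 * Real.exp (-t) ≤ 256 := by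
        rw [Real.exp_neg, mul_inv_le_iff₀ (Real.exp_pos t)]
        nlinarith [Real.exp_pos t]
      have hty : t^4 * y ≤ 256 := by
        nlinarith [pow_pos ht 4]
      have h116 : (1:ℝ)/16 ≤ (1-y)^4 := by
        have h12 : (1:ℝ)/2 ≤ 1-y := by linarith
        have := pow_le_pow_left₀ (by norm_num : (0:ℝ) ≤ 1/2) h12 4
        norm_num at this; linarith
      have hmu : m^4*u^4 = t^4 := by rw [ht_def]; ring
      nlinarith [mul_le_mul_of_nonneg_left hnum (by positivity : (0:ℝ) ≤ m^4*u^4)]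
    · have hgeom : 1 - y = u * ∑ i ∈ Finset.range (k+1), q^i := by
        have h := geom_sum_mul q (k+1)
        simp only [hy_def, hu_def]
        nlinarith [h]
      have hS : m * y ≤ ∑ i ∈ Finset.range (k+1), q^i := by
        have hterm : ∀ i ∈ Finset.range (k+1), y ≤ q^i := by
          intro i hi
          exact pow_le_pow_of_le_one h0.le h1.le (Finset.mem_range.mp hi).le
        have hsum := Finset.sum_le_sum hterm
        rw [Finset.sum_const, Finset.card_range, nsmul_eq_mul] at hsum
        rw [hm_def]
        push_cast at hsum ⊢
        linarith
      have h1y : u*(m*y) ≤ 1-y := by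
        rw [hgeom]; exact mul_le_mul_of_nonneg_left hS hu0.le
      have h2y : u*m/2 ≤ 1-y := by
        calc u*m/2 = (u*m)*(1/2) := by ring
          _ ≤ (u*m)*y := mul_le_mul_of_nonneg_left hy.le (mul_pos hu0 hm0).le
          _ = u*(m*y) := by ring
          _ ≤ 1-y := h1y
      have hp : (u*m/2)^4 ≤ (1-y)^4 := pow_le_pow_left₀ (by positivity) h2y 4
      have hmu4 : (0:ℝ) ≤ m^4*u^4 := by positivity
      have c1 : m^4*((y + 4*y^2 + y^3)*u^4) ≤ 6*(m^4*u^4) := by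
        calc m^4*((y + 4*y^2 + y^3)*u^4) = (m^4*u^4)*(y + 4*y^2 + y^3) := by ring
          _ ≤ (m^4*u^4)*(6*y) := mul_le_mul_of_nonneg_left hnum hmu4
          _ ≤ (m^4*u^4)*(6*1) := mul_le_mul_of_nonneg_left (by linarith) hmu4
          _ = 6*(m^4*u^4) := by ring
      have c2 : 1536*(m^4*u^4) ≤ 24576*(1-y)^4 := by
        calc (1536:ℝ)*(m^4*u^4) = 24576*((u*m/2)^4) := by ring
          _ ≤ 24576*(1-y)^4 := mul_le_mul_of_nonneg_left hp (by norm_num)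
      linarith
  have hy4 : (0:ℝ) < (1-y)^4 := by
    have h' : (0:ℝ) < 1-y := by linarith
    positivity
  have e1 : m^2 * ((y + 4*y^2 + y^3)/(1-y)^4) * (u^4/Real.pi^2)
      = (m^4*((y + 4*y^2 + y^3)*u^4))/((1-y)^4*Real.pi^2*m^2) := by
    field_simp
  rw [e1, div_le_div_iff₀ (mul_pos (mul_pos hy4 hπ) (pow_pos hm0 2)) (mul_pos hπ (pow_pos hm0 2))]
  calc m^4*((y + 4*y^2 + y^3)*u^4) * (Real.pi^2*m^2)
      ≤ 24576*(1-y)^4 * (Real.pi^2*m^2) :=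
        mul_le_mul_of_nonneg_right key (by positivity)
    _ = 24576 * ((1-y)^4*Real.pi^2*m^2) := by ring

lemma F_tendsto (k : ℕ) :
    Tendsto (fun q : ℝ => ((k:ℝ)+1)^2 *
        ((q^(k+1) + 4*(q^(k+1))^2 + (q^(k+1))^3)/(1-q^(k+1))^4) * ((1-q)^4/Real.pi^2))
      (𝓝[Set.Ioo (0:ℝ) 1] 1) (𝓝 (6/(Real.pi^2 * ((k:ℝ)+1)^2))) := by
  have hπ : (0:ℝ) < Real.pi^2 := by positivity
  set H : ℝ → ℝ := fun q => ((k:ℝ)+1)^2 *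
      ((q^(k+1) + 4*(q^(k+1))^2 + (q^(k+1))^3)/(∑ i ∈ Finset.range (k+1), q^i)^4)
      / Real.pi^2 with hH_def
  have hd : ContinuousAt (fun q : ℝ => (∑ i ∈ Finset.range (k+1), q^i)^4) 1 :=
    ((continuous_finset_sum _ (fun i _ => continuous_pow i)).pow 4).continuousAt
  have hdval : ((∑ i ∈ Finset.range (k+1), (1:ℝ)^i)^4) = ((k:ℝ)+1)^4 := by
    simp [Finset.sum_const, Finset.card_range]
  have hdne : ((∑ i ∈ Finset.range (k+1), (1:ℝ)^i)^4) ≠ 0 := by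
    rw [hdval]; positivity
  have hn : ContinuousAt (fun q : ℝ => q^(k+1) + 4*(q^(k+1))^2 + (q^(k+1))^3) 1 := by
    fun_prop
  have hH : ContinuousAt H 1 :=
    (continuousAt_const.mul (hn.div hd hdne)).div_const _
  have hHval : H 1 = 6/(Real.pi^2 * ((k:ℝ)+1)^2) := by
    have hk : ((k:ℝ)+1) ≠ 0 := by positivity
    simp only [hH_def, one_pow, Finset.sum_const, Finset.card_range, nsmul_eq_mul, mul_one]
    push_cast
    field_simp
    ring
  have htend : Tendsto H (𝓝[Set.Ioo (0:ℝ) 1] 1) (𝓝 (6/(Real.pi^2 * ((k:ℝ)+1)^2))) := by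
    rw [← hHval]
    exact (hH.tendsto).mono_left nhdsWithin_le_nhds
  refine htend.congr' ?_
  filter_upwards [self_mem_nhdsWithin] with q hq
  obtain ⟨hq0, hq1⟩ := hq
  have hgeom : 1 - q^(k+1) = (1-q) * ∑ i ∈ Finset.range (k+1), q^i := by
    linear_combination geom_sum_mul q (k+1)
  have hSpos : (0:ℝ) < ∑ i ∈ Finset.range (k+1), q^i :=
    Finset.sum_pos (fun i _ => pow_pos hq0 i) ⟨0, Finset.mem_range.mpr (Nat.succ_pos k)⟩
  have h1q : (1:ℝ) - q ≠ 0 := by linarith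
  rw [hH_def]
  simp only
  rw [hgeom]
  field_simp

theorem stmt11 :
    Tendsto (fun q : ℝ =>
        (∑' n : ℕ, ((n+1 : ℝ)^3 * (q^(n+1) + q^(2*(n+1))) / (1 - q^(n+1))^3))
          * (1-q)^4 / (6 * (Real.pi^2/6)))
      (𝓝[Set.Ioo (0:ℝ) 1] 1) (𝓝 1) := by
  have hπ : (0:ℝ) < Real.pi^2 := by positivity
  -- Basel-type limit sum
  have hg : HasSum (fun k : ℕ => 6/(Real.pi^2*((k:ℝ)+1)^2)) 1 := by
    have h := hasSum_zeta_two
    have h' := (hasSum_nat_add_iff' (f := fun n : ℕ => (1:ℝ)/(n:ℝ)^2) 1).2 h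
    simp only [Finset.range_one, Finset.sum_singleton, Nat.cast_zero] at h'
    norm_num at h'
    have h'' := h'.mul_left (6/Real.pi^2)
    have ev : (6/Real.pi^2) * (Real.pi^2/6) = 1 := by
      field_simp
    rw [ev] at h''
    have e : (fun i : ℕ => 6/Real.pi^2 * ((((i:ℕ):ℝ)+1)^2)⁻¹)
        = fun k : ℕ => 6/(Real.pi^2*((k:ℝ)+1)^2) := by
      funext i; field_simp
    rwa [e] at h''
  have hbound_summable : Summable (fun k : ℕ => 24576/(Real.pi^2*((k:ℝ)+1)^2)) := by
    refine (hg.summable.mul_left 4096).congr (fun k => ?_)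
    field_simp
    ring
  have main := tendsto_tsum_of_dominated_convergence
    (𝓕 := 𝓝[Set.Ioo (0:ℝ) 1] 1)
    (f := fun (q : ℝ) (k : ℕ) => ((k:ℝ)+1)^2 *
        ((q^(k+1) + 4*(q^(k+1))^2 + (q^(k+1))^3)/(1-q^(k+1))^4) * ((1-q)^4/Real.pi^2))
    (g := fun k : ℕ => 6/(Real.pi^2*((k:ℝ)+1)^2))
    (bound := fun k : ℕ => 24576/(Real.pi^2*((k:ℝ)+1)^2))
    hbound_summable F_tendsto ?_
  · rw [hg.tsum_eq] at main
    refine main.congr' ?_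
    filter_upwards [self_mem_nhdsWithin] with q hq
    obtain ⟨hq0, hq1⟩ := hq
    rw [tsum_mul_right, ← tsum_swap_eq hq0 hq1,
      show (6:ℝ) * (Real.pi^2/6) = Real.pi^2 by ring, mul_div_assoc]
  · filter_upwards [self_mem_nhdsWithin] with q hq k
    obtain ⟨hq0, hq1⟩ := hq
    have hF0 : (0:ℝ) ≤ ((k:ℝ)+1)^2 *
        ((q^(k+1) + 4*(q^(k+1))^2 + (q^(k+1))^3)/(1-q^(k+1))^4) * ((1-q)^4/Real.pi^2) := by
      have hy1 : q^(k+1) < 1 := pow_lt_one₀ hq0.le hq1 (Nat.succ_ne_zero k)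
      have hy0 : (0:ℝ) < q^(k+1) := pow_pos hq0 _
      have h4 : (0:ℝ) < (1-q^(k+1))^4 := by
        have : (0:ℝ) < 1 - q^(k+1) := by linarith
        positivity
      positivity
    rw [Real.norm_eq_abs, abs_of_nonneg hF0]
    exact F_bound hq0 hq1 k
end

section
/- Fix d ≥ 1 and ξ₁, ξ₂ ∈ ℝ with ‖ξ‖² = ξ₁² + ξ₂². For every prime p with ‖ξ‖ ≤ √p, the remainder R_p(ξ) = Σ_{m≥2} ((iξ₁+ξ₂)/2)^{↑m} ((iξ₁-ξ₂)/2)^{↑m} / (m!)² · p^{-m} of the hypergeometric function ₂F₁((iξ₁+ξ₂)/2, (iξ₁-ξ₂)/2; 1)(1/p) satisfies |R_p(ξ)| ≤ ( (‖ξ‖/2)(‖ξ‖/2+1) / (2 (1-p^{-1/2})^{‖ξ‖/2+2} p) )². -/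
open Polynomial Finset MeasureTheory Set

lemma asc_eval_nonneg (n : ℕ) (r : ℝ) (h : 0 ≤ r) :
    0 ≤ (ascPochhammer ℝ n).eval r := by
  induction n with
  | zero => simp
  | succ n ih =>
    rw [ascPochhammer_succ_right, eval_mul, eval_add, eval_X, eval_natCast]
    exact mul_nonneg ih (by positivity)

lemma asc_norm_le (n : ℕ) (a : ℂ) :
    ‖(ascPochhammer ℂ n).eval a‖ ≤ (ascPochhammer ℝ n).eval ‖a‖ := by
  induction n with
  | zero => simp
  | succ n ih =>
    rw [ascPochhammer_succ_right, eval_mul, eval_add, eval_X, eval_natCast,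
      ascPochhammer_succ_right, eval_mul, eval_add, eval_X, eval_natCast, norm_mul]
    have h1 : ‖a + (n : ℂ)‖ ≤ ‖a‖ + (n : ℝ) := by
      refine (norm_add_le _ _).trans ?_
      simp
    exact mul_le_mul ih h1 (norm_nonneg _) (asc_eval_nonneg _ _ (norm_nonneg a))

lemma asc_eval_succ (n : ℕ) (r : ℝ) :
    (ascPochhammer ℝ (n+1)).eval r = r * (ascPochhammer ℝ n).eval (r+1) := by
  rw [ascPochhammer_succ_left, eval_mul, eval_X, eval_comp, eval_add, eval_X, eval_one]

lemma Gamma_add_nat (t : ℝ) (ht : 0 < t) (m : ℕ) :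
    Real.Gamma (t + m) = (ascPochhammer ℝ m).eval t * Real.Gamma t := by
  induction m with
  | zero => simp
  | succ m ih =>
    have h1 : t + (m + 1 : ℕ) = (t + m) + 1 := by push_cast; ring
    rw [h1, Real.Gamma_add_one (by positivity), ih, ascPochhammer_succ_right,
      eval_mul, eval_add, eval_X, eval_natCast]
    ring

lemma binom_sum_range_le (t x : ℝ) (ht : 0 < t) (hx0 : 0 ≤ x) (hx1 : x < 1) (N : ℕ) :
    ∑ m ∈ Finset.range N, (ascPochhammer ℝ m).eval t / m.factorial * x ^ m
      ≤ (1 - x)⁻¹ ^ t := by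
  have hG : 0 < Real.Gamma t := Real.Gamma_pos_of_pos ht
  rw [← mul_le_mul_iff_of_pos_right hG]
  set F : ℕ → ℝ → ℝ := fun m u => x ^ m / m.factorial * (Real.exp (-u) * u ^ (t + m - 1))
    with hF
  have htm : ∀ m : ℕ, (0:ℝ) < t + m := fun m => by positivity
  have hFi : ∀ m ∈ Finset.range N, IntegrableOn (F m) (Ioi 0) := fun m _ =>
    (Real.GammaIntegral_convergent (htm m)).const_mul _
  have hFval : ∀ m : ℕ, ∫ u in Ioi (0:ℝ), F m u
      = x ^ m / m.factorial * Real.Gamma (t + m) := fun m => by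
    rw [hF]
    simp only []
    rw [MeasureTheory.integral_const_mul, ← Real.Gamma_eq_integral (htm m)]
  have h1x : (0:ℝ) < 1 - x := by linarith
  have hgi : IntegrableOn (fun u : ℝ => u ^ (t - 1) * Real.exp (-((1-x) * u))) (Ioi 0) := by
    have := integrableOn_rpow_mul_exp_neg_mul_rpow (p := 1) (s := t - 1) (b := 1 - x)
      (by linarith) one_pos h1x
    refine this.congr_fun (fun u hu => ?_) measurableSet_Ioi
    simp only [Real.rpow_one]
    ring_nf
  calc (∑ m ∈ Finset.range N, (ascPochhammer ℝ m).eval t / m.factorial * x ^ m)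
        * Real.Gamma t
      = ∑ m ∈ Finset.range N, ∫ u in Ioi (0:ℝ), F m u := by
        rw [Finset.sum_mul]
        refine Finset.sum_congr rfl fun m _ => ?_
        rw [hFval m, Gamma_add_nat t ht m]
        ring
    _ = ∫ u in Ioi (0:ℝ), ∑ m ∈ Finset.range N, F m u :=
        (MeasureTheory.integral_finset_sum _ hFi).symm
    _ ≤ ∫ u in Ioi (0:ℝ), u ^ (t - 1) * Real.exp (-((1-x) * u)) := by
        refine setIntegral_mono_on (integrable_finset_sum _ hFi) hgi measurableSet_Ioi
          fun u hu => ?_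
        have hu : (0:ℝ) < u := hu
        have hstep : ∀ m : ℕ, F m u
            = (Real.exp (-u) * u ^ (t-1)) * ((x*u) ^ m / m.factorial) := fun m => by
          rw [hF]
          simp only []
          rw [show t + (m:ℝ) - 1 = (t - 1) + (m:ℝ) by ring, Real.rpow_add hu,
            Real.rpow_natCast, mul_pow]
          ring
        simp only [hstep]
        rw [← Finset.mul_sum]
        have hexp : ∑ m ∈ Finset.range N, (x*u) ^ m / m.factorial ≤ Real.exp (x*u) :=
          Real.sum_le_exp_of_nonneg (by positivity) N
        calc (Real.exp (-u) * u ^ (t-1)) * ∑ m ∈ Finset.range N, (x*u) ^ m / m.factorial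
            ≤ (Real.exp (-u) * u ^ (t-1)) * Real.exp (x*u) := by
              exact mul_le_mul_of_nonneg_left hexp (by positivity)
          _ = u ^ (t-1) * Real.exp (-((1-x) * u)) := by
              rw [mul_comm (Real.exp (-u)), mul_assoc, ← Real.exp_add]
              congr 2
              ring
    _ = (1 / (1-x)) ^ t * Real.Gamma t := Real.integral_rpow_mul_exp_neg_mul_Ioi ht h1x
    _ = (1 - x)⁻¹ ^ t * Real.Gamma t := by rw [one_div]

lemma binom_summable (t x : ℝ) (ht : 0 < t) (hx0 : 0 ≤ x) (hx1 : x < 1) :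
    Summable (fun m : ℕ => (ascPochhammer ℝ m).eval t / m.factorial * x ^ m) :=
  summable_of_sum_range_le
    (fun m => by
      have := asc_eval_nonneg m t ht.le
      positivity)
    (binom_sum_range_le t x ht hx0 hx1)

lemma binom_tsum_le (t x : ℝ) (ht : 0 < t) (hx0 : 0 ≤ x) (hx1 : x < 1) :
    (∑' m : ℕ, (ascPochhammer ℝ m).eval t / m.factorial * x ^ m) ≤ (1 - x)⁻¹ ^ t :=
  Real.tsum_le_of_sum_range_le
    (fun m => by
      have := asc_eval_nonneg m t ht.le
      positivity)
    (binom_sum_range_le t x ht hx0 hx1)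

theorem stmt14 (ξ₁ ξ₂ : ℝ) (p : ℕ) (hp : p.Prime)
    (hξ : Real.sqrt (ξ₁^2 + ξ₂^2) ≤ Real.sqrt p) :
    ‖∑' m : ℕ, (ascPochhammer ℂ (m+2)).eval ((Complex.I * ξ₁ + ξ₂) / 2)
        * (ascPochhammer ℂ (m+2)).eval ((Complex.I * ξ₁ - ξ₂) / 2)
        / (((m+2).factorial : ℂ))^2 * (p : ℂ)^(-(m+2 : ℤ))‖
      ≤ ((Real.sqrt (ξ₁^2 + ξ₂^2) / 2) * (Real.sqrt (ξ₁^2 + ξ₂^2) / 2 + 1)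
          / (2 * (1 - (p:ℝ) ^ (-(1:ℝ)/2)) ^ (Real.sqrt (ξ₁^2 + ξ₂^2) / 2 + 2) * p))^2 := by
  set s : ℝ := Real.sqrt (ξ₁^2 + ξ₂^2) / 2 with hs_def
  have hs0 : 0 ≤ s := by positivity
  set q : ℝ := (p : ℝ) with hq_def
  have hq2 : (2:ℝ) ≤ q := by rw [hq_def]; exact_mod_cast hp.two_le
  have hq0 : (0:ℝ) < q := by linarith
  set x : ℝ := q ^ (-(1:ℝ)/2) with hx_def
  have hx0 : 0 < x := Real.rpow_pos_of_pos hq0 _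
  have hx1 : x < 1 := Real.rpow_lt_one_of_one_lt_of_neg (by linarith) (by norm_num)
  have h1x : (0:ℝ) < 1 - x := by linarith
  have hx2 : x ^ 2 = q⁻¹ := by
    rw [hx_def, ← Real.rpow_natCast (q ^ (-(1:ℝ)/2)) 2, ← Real.rpow_mul hq0.le]
    norm_num [Real.rpow_neg_one]
  set t : ℝ := s + 2 with ht_def
  have ht : 0 < t := by rw [ht_def]; linarith
  set g : ℕ → ℝ := fun m => (ascPochhammer ℝ m).eval t / m.factorial * x ^ m with hg_def
  have hg_nonneg : ∀ m, 0 ≤ g m := fun m => by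
    have := asc_eval_nonneg m t ht.le
    rw [hg_def]; positivity
  have hg_sum : Summable g := binom_summable t x ht hx0.le hx1
  have hg_le : (∑' m, g m) ≤ (1 - x)⁻¹ ^ t := binom_tsum_le t x ht hx0.le hx1
  set P : ℝ := (1 - x) ^ t with hP_def
  have hP0 : 0 < P := Real.rpow_pos_of_pos h1x t
  set B : ℝ := s * (s + 1) / (2 * P * q) with hB_def
  have hB0 : 0 ≤ B := by positivity
  -- norms of the two complex arguments
  have hna : ‖((Complex.I * ξ₁ + ξ₂) / 2 : ℂ)‖ = s := by
    have h1 : ‖(Complex.I * (ξ₁:ℂ) + (ξ₂:ℂ))‖ = Real.sqrt (ξ₁^2 + ξ₂^2) := by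
      rw [Complex.norm_def, Complex.normSq_apply]
      congr 1
      simp [Complex.add_re, Complex.add_im, Complex.mul_re, Complex.mul_im]
      ring
    rw [hs_def, norm_div, h1]
    norm_num
  have hnb : ‖((Complex.I * ξ₁ - ξ₂) / 2 : ℂ)‖ = s := by
    have h1 : ‖(Complex.I * (ξ₁:ℂ) - (ξ₂:ℂ))‖ = Real.sqrt (ξ₁^2 + ξ₂^2) := by
      rw [Complex.norm_def, Complex.normSq_apply]
      congr 1
      simp [Complex.sub_re, Complex.sub_im, Complex.mul_re, Complex.mul_im]
      ring
    rw [hs_def, norm_div, h1]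
    norm_num
  set c : ℕ → ℝ := fun k => (ascPochhammer ℝ k).eval s / k.factorial * x ^ k with hc_def
  have hc_nonneg : ∀ k, 0 ≤ c k := fun k => by
    have := asc_eval_nonneg k s hs0
    rw [hc_def]; positivity
  set e : ℕ → ℝ := fun m => s * (s + 1) / 2 * x ^ 2 * g m with he_def
  have he_nonneg : ∀ m, 0 ≤ e m := fun m => by
    have := hg_nonneg m
    rw [he_def]; positivity
  have hsum_e : Summable e := hg_sum.mul_left _
  have htsum_e : (∑' m, e m) ≤ B := by
    rw [he_def]
    rw [tsum_mul_left]
    have h1 : s * (s + 1) / 2 * x ^ 2 * (∑' m, g m)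
        ≤ s * (s + 1) / 2 * x ^ 2 * ((1 - x)⁻¹ ^ t) := by
      refine mul_le_mul_of_nonneg_left hg_le (by positivity)
    refine h1.trans_eq ?_
    rw [Real.inv_rpow h1x.le, ← hP_def, hx2, hB_def]
    calc s * (s + 1) / 2 * q⁻¹ * P⁻¹ = s * (s + 1) * (2 * P * q)⁻¹ := by
          rw [mul_inv, mul_inv]; ring
      _ = s * (s + 1) / (2 * P * q) := (div_eq_mul_inv _ _).symm
  have he_le_B : ∀ m, e m ≤ B := fun m =>
    (Summable.le_tsum hsum_e m fun k _ => he_nonneg k).trans htsum_e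
  have hce : ∀ m, c (m + 2) ≤ e m := by
    intro m
    have hasc : (ascPochhammer ℝ (m+2)).eval s
        = s * (s + 1) * (ascPochhammer ℝ m).eval t := by
      rw [asc_eval_succ, asc_eval_succ, show s + 1 + 1 = t by rw [ht_def]; ring]
      ring
    set E : ℝ := (ascPochhammer ℝ m).eval t with hE_def
    have hE : 0 ≤ E := asc_eval_nonneg m t ht.le
    have hcval : c (m + 2) = s * (s+1) * E * x ^ (m+2) / ((m+2).factorial : ℝ) := by
      rw [hc_def]
      simp only []
      rw [hasc]
      ring
    have heval : e m = s * (s+1) * E * x ^ (m+2) / (2 * (m.factorial : ℝ)) := by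
      rw [he_def, hg_def]
      simp only []
      rw [← hE_def]
      field_simp
      ring
    rw [hcval, heval]
    have hfac : (2 * (m.factorial : ℝ)) ≤ ((m+2).factorial : ℝ) := by
      have : 2 * m.factorial ≤ (m+2).factorial := by
        calc 2 * m.factorial ≤ ((m+2)*(m+1)) * m.factorial :=
              Nat.mul_le_mul_right _ (by nlinarith)
          _ = (m+2).factorial := by
              rw [show m + 2 = (m+1) + 1 from rfl, Nat.factorial_succ, Nat.factorial_succ]
              ring
      exact_mod_cast this
    refine div_le_div_of_nonneg_left (by positivity) (by positivity) hfac
  -- pointwise bound on the complex terms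
  set f : ℕ → ℂ := fun m => (ascPochhammer ℂ (m+2)).eval ((Complex.I * ξ₁ + ξ₂) / 2)
      * (ascPochhammer ℂ (m+2)).eval ((Complex.I * ξ₁ - ξ₂) / 2)
      / (((m+2).factorial : ℂ))^2 * (p : ℂ)^(-(m+2 : ℤ)) with hf_def
  have hpow : ∀ m : ℕ, ‖(p : ℂ)^(-(m+2 : ℤ))‖ = (x ^ (m+2)) ^ 2 := by
    intro m
    rw [norm_zpow, Complex.norm_natCast, ← hq_def]
    have h1 : (x ^ (m+2)) ^ 2 = (x ^ 2) ^ (m+2) := by ring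
    rw [h1, hx2, inv_pow, ← zpow_natCast q (m+2), ← zpow_neg]
    congr 1
    try push_cast
    try ring
  have hpt : ∀ m, ‖f m‖ ≤ e m * B := by
    intro m
    have h1 : ‖f m‖ = ‖(ascPochhammer ℂ (m+2)).eval ((Complex.I * ξ₁ + ξ₂) / 2)‖
        * ‖(ascPochhammer ℂ (m+2)).eval ((Complex.I * ξ₁ - ξ₂) / 2)‖
        / ((m+2).factorial : ℝ)^2 * (x ^ (m+2)) ^ 2 := by
      rw [hf_def]
      simp only []
      rw [norm_mul, norm_div, norm_mul, norm_pow, Complex.norm_natCast, hpow]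
    have h2 : ‖f m‖ ≤ c (m+2) ^ 2 := by
      rw [h1]
      have ha := asc_norm_le (m+2) ((Complex.I * ξ₁ + ξ₂) / 2)
      have hb := asc_norm_le (m+2) ((Complex.I * ξ₁ - ξ₂) / 2)
      rw [hna] at ha
      rw [hnb] at hb
      have hA : 0 ≤ (ascPochhammer ℝ (m+2)).eval s := asc_eval_nonneg _ _ hs0
      have hfa : (0:ℝ) < ((m+2).factorial : ℝ) := by positivity
      calc ‖(ascPochhammer ℂ (m+2)).eval ((Complex.I * ξ₁ + ξ₂) / 2)‖
            * ‖(ascPochhammer ℂ (m+2)).eval ((Complex.I * ξ₁ - ξ₂) / 2)‖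
            / ((m+2).factorial : ℝ)^2 * (x ^ (m+2)) ^ 2
          ≤ (ascPochhammer ℝ (m+2)).eval s * (ascPochhammer ℝ (m+2)).eval s
            / ((m+2).factorial : ℝ)^2 * (x ^ (m+2)) ^ 2 := by
            gcongr <;> first
              | exact ha
              | exact hb
              | exact (norm_nonneg _).trans ha
              | positivity
        _ = c (m+2) ^ 2 := by
            rw [hc_def]
            simp only []
            ring
    refine h2.trans ?_
    have : c (m+2) ^ 2 ≤ e m * e m := by
      rw [sq]
      exact mul_le_mul (hce m) (hce m) (hc_nonneg _) (he_nonneg m)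
    exact this.trans (mul_le_mul_of_nonneg_left (he_le_B m) (he_nonneg m))
  have hsum_fB : Summable (fun m => e m * B) := hsum_e.mul_right B
  have hsum_norm : Summable (fun m => ‖f m‖) :=
    Summable.of_nonneg_of_le (fun m => norm_nonneg _) hpt hsum_fB
  have hgoal_rhs : (s * (s + 1) / (2 * P * q)) ^ 2 = B ^ 2 := by rw [hB_def]
  calc ‖∑' m, f m‖ ≤ ∑' m, ‖f m‖ := norm_tsum_le_tsum_norm hsum_norm
    _ ≤ ∑' m, e m * B := Summable.tsum_le_tsum hpt hsum_norm hsum_fB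
    _ = (∑' m, e m) * B := tsum_mul_right
    _ ≤ B * B := mul_le_mul_of_nonneg_right htsum_e hB0
    _ = B ^ 2 := (sq B).symm
end
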